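/- Let X be a reflexive strictly convex real Banach space and let Y be any real Banach space. If T : X → Y is a nonzero compact bounded linear operator that is a left symmetric point of K(X,Y) with respect to Birkhoff–James orthogonality, then Tx is a left symmetric point of Y with respect to Birkhoff–James orthogonality for every x ∈ M_T. -/

import Mathlib

open Filter Topology Set Metric NormedSpace

noncomputable section

/-- Birkhoff–James orthogonality: `x ⊥_B y` iff `‖x + t • y‖ ≥ ‖x‖` for all real `t`. -/
def BJOrth {E : Type*} [NormedAddCommGroup E] [NormedSpace ℝ E] (x y : E) : Prop :=
  ∀ t : ℝ, ‖x‖ ≤ ‖x + t • y‖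

/-- The norm derivative `ρ'₊(x,y) = ‖x‖ · lim_{t→0⁺} (‖x+ty‖-‖x‖)/t`. -/
def rhoPlus {E : Type*} [NormedAddCommGroup E] [NormedSpace ℝ E] (x y : E) : ℝ :=
  ‖x‖ * limUnder (𝓝[>] (0 : ℝ)) (fun t => (‖x + t • y‖ - ‖x‖) / t)

/-- The norm derivative `ρ'₋(x,y) = ‖x‖ · lim_{t→0⁻} (‖x+ty‖-‖x‖)/t`. -/
def rhoMinus {E : Type*} [NormedAddCommGroup E] [NormedSpace ℝ E] (x y : E) : ℝ :=
  ‖x‖ * limUnder (𝓝[<] (0 : ℝ)) (fun t => (‖x + t • y‖ - ‖x‖) / t)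

/-- The norm derivative `ρ'(x,y) = (ρ'₊(x,y) + ρ'₋(x,y))/2`. -/
def rhoDer {E : Type*} [NormedAddCommGroup E] [NormedSpace ℝ E] (x y : E) : ℝ :=
  (rhoPlus x y + rhoMinus x y) / 2

/-- `x` is an exposed point of the closed unit ball of `E`: there is a norm-one functional `f`
with `f x = 1` and `f u < 1` for every `u` in the ball with `u ≠ x`. -/
def ExposedPt {E : Type*} [NormedAddCommGroup E] [NormedSpace ℝ E] (x : E) : Prop :=
  ‖x‖ ≤ 1 ∧ ∃ f : E →L[ℝ] ℝ, ‖f‖ = 1 ∧ f x = 1 ∧ ∀ u : E, ‖u‖ ≤ 1 → u ≠ x → f u < 1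

section Aux

set_option linter.unusedSectionVars false

variable {X Y : Type*} [NormedAddCommGroup X] [NormedSpace ℝ X] [CompleteSpace X]
  [NormedAddCommGroup Y] [NormedSpace ℝ Y]

/-- Weak compactness of the unit ball in a reflexive space, ultrafilter form. -/
lemma weak_cluster (hrefl : Function.Surjective (NormedSpace.inclusionInDoubleDual ℝ X))
    (𝒰 : Ultrafilter X) (hball : Metric.closedBall (0:X) 1 ∈ 𝒰) :
    ∃ w : X, ‖w‖ ≤ 1 ∧ ∀ f : X →L[ℝ] ℝ, Tendsto (fun u => f u) (𝒰 : Filter X) (𝓝 (f w)) := by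
  set ι := NormedSpace.inclusionInDoubleDual ℝ X with hι
  have hnorm : ∀ u : X, ‖ι u‖ = ‖u‖ := fun u =>
    (NormedSpace.inclusionInDoubleDualLi ℝ (E := X)).norm_map u
  set J : X → WeakDual ℝ (StrongDual ℝ X) := fun u => StrongDual.toWeakDual (ι u)
    with hJ
  have hK : IsCompact (WeakDual.toStrongDual ⁻¹'
      Metric.closedBall (0 : StrongDual ℝ (StrongDual ℝ X)) 1) :=
    WeakDual.isCompact_closedBall 0 1
  have hmem : WeakDual.toStrongDual ⁻¹'
      Metric.closedBall (0 : StrongDual ℝ (StrongDual ℝ X)) 1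
      ∈ (𝒰.map J : Filter (WeakDual ℝ (StrongDual ℝ X))) := by
    refine Filter.mem_map.mpr (Filter.mem_of_superset hball ?_)
    intro u hu
    simp only [Set.mem_preimage, Metric.mem_closedBall, dist_zero_right] at hu ⊢
    calc dist (WeakDual.toStrongDual (J u)) 0 = ‖ι u‖ := dist_zero_right (ι u)
      _ = ‖u‖ := hnorm u
      _ ≤ 1 := by simpa using hu
  obtain ⟨φ, hφmem, hφle⟩ := hK.ultrafilter_le_nhds (𝒰.map J) (le_principal_iff.mpr hmem)
  obtain ⟨w, hw⟩ := hrefl (WeakDual.toStrongDual φ)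
  refine ⟨w, ?_, ?_⟩
  · rw [← hnorm w, hw]
    exact (dist_zero_right (WeakDual.toStrongDual φ)).symm.trans_le hφmem
  · intro f
    have hev : Continuous fun ψ : WeakDual ℝ (StrongDual ℝ X) => ψ f :=
      WeakDual.eval_continuous f
    have h1 : Tendsto (fun u => (J u) f) (𝒰 : Filter X) (𝓝 (φ f)) :=
      (hev.tendsto φ).comp hφle
    have h2 : ∀ u : X, (J u) f = f u := fun u => rfl
    have h3 : φ f = f w := by
      have : WeakDual.toStrongDual φ f = f w := by rw [← hw]; rfl
      exact this
    simpa [h2, h3] using h1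

/-- A compact operator maps an ultrafilter converging weakly (within the ball) to a
norm-convergent ultrafilter. -/
lemma compact_tendsto (A : X →L[ℝ] Y) (hA : IsCompactOperator A)
    (𝒰 : Ultrafilter X) (hball : Metric.closedBall (0:X) 1 ∈ 𝒰) {w : X}
    (hw : ∀ f : X →L[ℝ] ℝ, Tendsto (fun u => f u) (𝒰 : Filter X) (𝓝 (f w))) :
    Tendsto (fun u => A u) (𝒰 : Filter X) (𝓝 (A w)) := by
  obtain ⟨K, hK, hKA⟩ := hA.image_closedBall_subset_compact (𝕜₁ := ℝ) 1
  have hmem : K ∈ (𝒰.map A : Filter Y) := by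
    refine Filter.mem_map.mpr (Filter.mem_of_superset hball ?_)
    intro u hu
    exact hKA ⟨u, hu, rfl⟩
  obtain ⟨v, hvK, hvle⟩ := hK.ultrafilter_le_nhds (𝒰.map A) (le_principal_iff.mpr hmem)
  have hvw : v = A w := by
    rw [NormedSpace.eq_iff_forall_dual_eq (𝕜 := ℝ)]
    intro g
    have h1 : Tendsto (fun u => g (A u)) (𝒰 : Filter X) (𝓝 (g v)) :=
      (g.continuous.tendsto v).comp hvle
    have h2 : Tendsto (fun u => (g.comp A) u) (𝒰 : Filter X) (𝓝 ((g.comp A) w)) :=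
      hw (g.comp A)
    simp only [ContinuousLinearMap.comp_apply] at h2
    exact tendsto_nhds_unique h1 h2
  rw [← hvw]; exact hvle

/-- A compact operator on a reflexive space attains its norm. -/
lemma attains (hrefl : Function.Surjective (NormedSpace.inclusionInDoubleDual ℝ X))
    (A : X →L[ℝ] Y) (hA : IsCompactOperator A) :
    ∃ u : X, ‖u‖ ≤ 1 ∧ ‖A u‖ = ‖A‖ := by
  have hex : ∀ n : ℕ, ∃ u : X, ‖u‖ ≤ 1 ∧ ‖A‖ - 1/(n+1) < ‖A u‖ := by
    intro n
    by_contra h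
    push_neg at h
    have hle : ‖A‖ ≤ ‖A‖ - 1/(n+1) := by
      rcases le_or_gt ‖A‖ (‖A‖ - 1/(n+1)) with h' | h'
      · exact h'
      · have hc : 0 ≤ ‖A‖ - 1/(n+1) ∨ ‖A‖ - 1/(n+1) < 0 := le_or_gt _ _
        rcases hc with hc | hc
        · refine A.opNorm_le_bound hc (fun z => ?_)
          rcases eq_or_ne z 0 with rfl | hz
          · simp
          · have hzn : (0:ℝ) < ‖z‖ := norm_pos_iff.mpr hz
            have hu : ‖(‖z‖⁻¹ • z : X)‖ ≤ 1 := by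
              rw [norm_smul, norm_inv, norm_norm]
              rw [inv_mul_cancel₀ hzn.ne']
            have := h _ hu
            rw [map_smul, norm_smul, norm_inv, norm_norm] at this
            calc ‖A z‖ = ‖z‖ * (‖z‖⁻¹ * ‖A z‖) := by field_simp
              _ ≤ ‖z‖ * (‖A‖ - 1/(n+1)) := by nlinarith
              _ = (‖A‖ - 1/(n+1)) * ‖z‖ := mul_comm _ _
        · exfalso
          have h0 := h 0 (by simp)
          simp only [map_zero, norm_zero] at h0
          have : (0:ℝ) < 1/(n+1) := by positivity
          nlinarith [norm_nonneg A]
    have : (0:ℝ) < 1/(n+1) := by positivity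
    linarith
  choose u hu1 hu2 using hex
  have hAle : ∀ n, ‖A (u n)‖ ≤ ‖A‖ := fun n => by
    calc ‖A (u n)‖ ≤ ‖A‖ * ‖u n‖ := A.le_opNorm _
      _ ≤ ‖A‖ * 1 := by nlinarith [norm_nonneg A, hu1 n]
      _ = ‖A‖ := mul_one _
  have htend : Tendsto (fun n => ‖A (u n)‖) atTop (𝓝 ‖A‖) := by
    refine tendsto_of_tendsto_of_tendsto_of_le_of_le (g := fun n : ℕ => ‖A‖ - 1/(n+1))
      (h := fun _ => ‖A‖) ?_ tendsto_const_nhds (fun n => (hu2 n).le) hAle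
    have : Tendsto (fun n : ℕ => 1/((n:ℝ)+1)) atTop (𝓝 0) := tendsto_one_div_add_atTop_nhds_zero_nat
    simpa using tendsto_const_nhds.sub this
  set 𝒰₀ : Ultrafilter ℕ := Ultrafilter.of atTop
  have h𝒰₀ : (𝒰₀ : Filter ℕ) ≤ atTop := Ultrafilter.of_le _
  set 𝒰 : Ultrafilter X := 𝒰₀.map u
  have hball : Metric.closedBall (0:X) 1 ∈ 𝒰 := by
    refine Filter.mem_map.mpr (Filter.univ_mem' fun n => ?_)
    simpa using hu1 n
  obtain ⟨w, hw1, hw2⟩ := weak_cluster hrefl 𝒰 hball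
  have hAw : Tendsto (fun n => A (u n)) (𝒰₀ : Filter ℕ) (𝓝 (A w)) :=
    compact_tendsto A hA 𝒰 hball hw2
  have h1 : Tendsto (fun n => ‖A (u n)‖) (𝒰₀ : Filter ℕ) (𝓝 ‖A w‖) := hAw.norm
  have h2 : Tendsto (fun n => ‖A (u n)‖) (𝒰₀ : Filter ℕ) (𝓝 ‖A‖) := htend.mono_left h𝒰₀
  exact ⟨w, hw1, tendsto_nhds_unique h1 h2⟩

lemma coe_add_smul (S T : X →L[ℝ] Y) (c : ℝ) :
    (⇑(S + c • T) : X → Y) = ⇑S + c • ⇑T := by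
  ext u; simp

lemma key (hrefl : Function.Surjective (NormedSpace.inclusionInDoubleDual ℝ X))
    (S T : X →L[ℝ] Y) (hSc : IsCompactOperator S) (hTc : IsCompactOperator T)
    (hST : ∀ t : ℝ, ‖S‖ ≤ ‖S + t • T‖) (x : X)
    (hMS : ∀ u : X, ‖u‖ ≤ 1 → ‖S u‖ = ‖S‖ → u = x ∨ u = -x) :
    ∀ s : ℝ, ‖S x‖ ≤ ‖S x + s • T x‖ := by
  intro s
  rcases eq_or_ne s 0 with rfl | hs
  · simp
  -- compactness of S + c • T
  have hcomp : ∀ c : ℝ, IsCompactOperator (⇑(S + c • T)) := by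
    intro c
    rw [coe_add_smul]
    exact hSc.add (hTc.smul c)
  -- norm attaining points
  have hex : ∀ r : ℝ, ∃ u : X, ‖u‖ ≤ 1 ∧ ‖(S + (s*r) • T) u‖ = ‖S + (s*r) • T‖ :=
    fun r => attains hrefl _ (hcomp (s*r))
  choose u hu1 hu2 using hex
  set 𝒰₀ : Ultrafilter ℝ := Ultrafilter.of (𝓝[>] (0:ℝ))
  have h𝒰₀ : (𝒰₀ : Filter ℝ) ≤ 𝓝[>] (0:ℝ) := Ultrafilter.of_le _
  set 𝒰 : Ultrafilter X := 𝒰₀.map u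
  have hball : Metric.closedBall (0:X) 1 ∈ 𝒰 := by
    refine Filter.mem_map.mpr (Filter.univ_mem' fun r => ?_)
    simpa using hu1 r
  obtain ⟨w, hw1, hw2⟩ := weak_cluster hrefl 𝒰 hball
  have hSw : Tendsto (fun r => S (u r)) (𝒰₀ : Filter ℝ) (𝓝 (S w)) :=
    compact_tendsto S hSc 𝒰 hball hw2
  have hTw : Tendsto (fun r => T (u r)) (𝒰₀ : Filter ℝ) (𝓝 (T w)) :=
    compact_tendsto T hTc 𝒰 hball hw2
  have hr0 : Tendsto (fun r : ℝ => s * r) (𝒰₀ : Filter ℝ) (𝓝 0) := by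
    have : Tendsto (fun r : ℝ => s * r) (𝓝[>] (0:ℝ)) (𝓝 (s * 0)) :=
      ((continuous_const.mul continuous_id).tendsto 0).mono_left nhdsWithin_le_nhds
    simpa using this.mono_left h𝒰₀
  -- ‖S w‖ = ‖S‖
  have happly : ∀ r : ℝ, (S + (s*r) • T) (u r) = S (u r) + (s*r) • T (u r) := by
    intro r; simp
  have hlim : Tendsto (fun r => S (u r) + (s*r) • T (u r)) (𝒰₀ : Filter ℝ) (𝓝 (S w)) := by
    have := hSw.add (hr0.smul hTw)
    simpa using this
  have hnormlim : Tendsto (fun r => ‖(S + (s*r) • T) (u r)‖) (𝒰₀ : Filter ℝ) (𝓝 ‖S w‖) := by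
    simp only [happly]
    exact hlim.norm
  have hSwnorm : ‖S w‖ = ‖S‖ := by
    have hge : ‖S‖ ≤ ‖S w‖ := by
      refine ge_of_tendsto hnormlim (Filter.Eventually.of_forall fun r => ?_)
      rw [hu2 r]; exact hST (s*r)
    have hle : ‖S w‖ ≤ ‖S‖ := by
      calc ‖S w‖ ≤ ‖S‖ * ‖w‖ := S.le_opNorm w
        _ ≤ ‖S‖ * 1 := by nlinarith [norm_nonneg S]
        _ = ‖S‖ := mul_one _
    linarith
  -- pointwise inequality for r ∈ (0, 1]
  have hpt : ∀ r ∈ Set.Ioc (0:ℝ) 1, ‖S (u r)‖ ≤ ‖S (u r) + s • T (u r)‖ := by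
    intro r hr
    set a := S (u r); set b := T (u r)
    have hA : ‖a‖ ≤ ‖a + (s*r) • b‖ := by
      have h1 : ‖a‖ ≤ ‖S‖ := by
        calc ‖a‖ ≤ ‖S‖ * ‖u r‖ := S.le_opNorm _
          _ ≤ ‖S‖ * 1 := by nlinarith [norm_nonneg S, hu1 r]
          _ = ‖S‖ := mul_one _
      have h2 : ‖S‖ ≤ ‖(S + (s*r) • T) (u r)‖ := by rw [hu2 r]; exact hST (s*r)
      rw [happly r] at h2
      exact h1.trans h2
    have hid : a + (s*r) • b = (1 - r) • a + r • (a + s • b) := by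
      rw [smul_add, smul_smul, sub_smul, one_smul]
      rw [mul_comm r s]
      abel
    have hconv : ‖a + (s*r) • b‖ ≤ (1 - r) * ‖a‖ + r * ‖a + s • b‖ := by
      rw [hid]
      calc ‖(1 - r) • a + r • (a + s • b)‖ ≤ ‖(1 - r) • a‖ + ‖r • (a + s • b)‖ := norm_add_le _ _
        _ = (1 - r) * ‖a‖ + r * ‖a + s • b‖ := by
            rw [norm_smul, norm_smul, Real.norm_eq_abs, Real.norm_eq_abs,
              abs_of_nonneg (by linarith [hr.2] : (0:ℝ) ≤ 1 - r), abs_of_pos hr.1]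
    nlinarith [hr.1, norm_nonneg a]
  -- pass to the limit
  have hev : ∀ᶠ r in (𝒰₀ : Filter ℝ), ‖S (u r)‖ ≤ ‖S (u r) + s • T (u r)‖ := by
    have hIoc : Set.Ioc (0:ℝ) 1 ∈ (𝒰₀ : Filter ℝ) :=
      h𝒰₀ (Ioc_mem_nhdsGT_of_mem ⟨le_rfl, one_pos⟩)
    exact Filter.eventually_of_mem hIoc hpt
  have hLHS : Tendsto (fun r => ‖S (u r)‖) (𝒰₀ : Filter ℝ) (𝓝 ‖S w‖) := hSw.norm
  have hRHS : Tendsto (fun r => ‖S (u r) + s • T (u r)‖) (𝒰₀ : Filter ℝ)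
      (𝓝 ‖S w + s • T w‖) := (hSw.add (hTw.const_smul s)).norm
  have hfinal : ‖S w‖ ≤ ‖S w + s • T w‖ := le_of_tendsto_of_tendsto hLHS hRHS hev
  rcases hMS w hw1 hSwnorm with rfl | hw
  · exact hfinal
  · rw [hw] at hfinal
    simp only [map_neg, smul_neg, ← neg_add, norm_neg] at hfinal
    exact hfinal

end Aux

theorem stmt2 {X Y : Type*} [NormedAddCommGroup X] [NormedSpace ℝ X] [CompleteSpace X]
    [StrictConvexSpace ℝ X]
    [NormedAddCommGroup Y] [NormedSpace ℝ Y] [CompleteSpace Y]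
    (hrefl : Function.Surjective (NormedSpace.inclusionInDoubleDual ℝ X))
    (T : X →L[ℝ] Y) (hTc : IsCompactOperator T) (hT0 : T ≠ 0)
    (hleft : ∀ S : X →L[ℝ] Y, IsCompactOperator S → BJOrth T S → BJOrth S T) :
    ∀ x : X, (‖x‖ = 1 ∧ ‖T x‖ = ‖T‖) →
      ∀ y : Y, BJOrth (T x) y → BJOrth y (T x) := by
  intro x hx y hxy
  obtain ⟨hx1, hxT⟩ := hx
  rcases eq_or_ne y 0 with rfl | hy0
  · intro t; simp
  have hx0 : x ≠ 0 := by intro h; rw [h] at hx1; simp at hx1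
  obtain ⟨f, hf1, hfx⟩ := exists_dual_vector ℝ x (norm_ne_zero_iff.mpr hx0)
  have hfx1 : f x = 1 := by rw [hfx, hx1]; norm_num
  set S : X →L[ℝ] Y := f.smulRight y with hS
  have hSapp : ∀ u, S u = f u • y := fun u => rfl
  have hSnorm : ‖S‖ = ‖y‖ := by
    rw [hS, ContinuousLinearMap.norm_smulRight_apply, hf1, one_mul]
  -- S is a compact operator
  have hfc : IsCompactOperator (⇑f) := by
    refine ⟨Metric.closedBall (0:ℝ) (‖f‖+1), isCompact_closedBall _ _, ?_⟩
    refine Filter.mem_of_superset (Metric.ball_mem_nhds 0 one_pos) ?_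
    intro u hu
    simp only [Metric.mem_ball, dist_zero_right] at hu
    simp only [Set.mem_preimage, Metric.mem_closedBall, dist_zero_right]
    calc ‖f u‖ ≤ ‖f‖ * ‖u‖ := f.le_opNorm u
      _ ≤ ‖f‖ * 1 := by nlinarith [norm_nonneg f]
      _ ≤ ‖f‖ + 1 := by nlinarith [norm_nonneg f]
  have hSc : IsCompactOperator (⇑S) := by
    have hg := hfc.clm_comp ((ContinuousLinearMap.id ℝ ℝ).smulRight y)
    have : ⇑S = ⇑((ContinuousLinearMap.id ℝ ℝ).smulRight y) ∘ ⇑f := by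
      funext u; simp [hSapp]
    rw [this]; exact hg
  -- T is Birkhoff-James orthogonal to S
  have hTS : BJOrth T S := by
    intro t
    have h1 : (T + t • S) x = T x + t • y := by
      simp [hSapp, hfx1]
    calc ‖T‖ = ‖T x‖ := hxT.symm
      _ ≤ ‖T x + t • y‖ := hxy t
      _ = ‖(T + t • S) x‖ := by rw [h1]
      _ ≤ ‖T + t • S‖ * ‖x‖ := (T + t • S).le_opNorm x
      _ = ‖T + t • S‖ := by rw [hx1, mul_one]
  have hSTorth : BJOrth S T := hleft S hSc hTS
  -- unit vectors where S attains its norm are ±x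
  have huniq : ∀ v : X, ‖v‖ = 1 → f v = 1 → v = x := by
    intro v hv hfv
    have hsum : ‖v + x‖ = ‖v‖ + ‖x‖ := by
      have hge : (2:ℝ) ≤ ‖v + x‖ := by
        have : f (v + x) = 2 := by rw [map_add, hfv, hfx1]; norm_num
        have h2 : ‖f (v + x)‖ ≤ ‖f‖ * ‖v + x‖ := f.le_opNorm _
        rw [this, hf1, one_mul] at h2
        simpa using h2.trans_eq' (by norm_num)
      have hle : ‖v + x‖ ≤ 2 := by
        calc ‖v + x‖ ≤ ‖v‖ + ‖x‖ := norm_add_le _ _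
          _ = 2 := by rw [hv, hx1]; norm_num
      rw [hv, hx1]; linarith
    exact eq_of_norm_eq_of_norm_add_eq (by rw [hv, hx1]) hsum
  have hMS : ∀ u : X, ‖u‖ ≤ 1 → ‖S u‖ = ‖S‖ → u = x ∨ u = -x := by
    intro u hu hSu
    have hyn : (0:ℝ) < ‖y‖ := norm_pos_iff.mpr hy0
    have habs : |f u| = 1 := by
      have : ‖S u‖ = |f u| * ‖y‖ := by
        rw [hSapp, norm_smul, Real.norm_eq_abs]
      rw [this, hSnorm] at hSu
      have := mul_right_cancel₀ hyn.ne' (hSu.trans (one_mul ‖y‖).symm)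
      exact this
    have hun : ‖u‖ = 1 := by
      have h1 : |f u| ≤ ‖u‖ := by
        have := f.le_opNorm u
        rwa [hf1, one_mul, Real.norm_eq_abs] at this
      linarith [habs ▸ h1]
    rcases abs_eq (by norm_num : (0:ℝ) ≤ 1) |>.mp habs with hfu | hfu
    · exact Or.inl (huniq u hun hfu)
    · refine Or.inr ?_
      have h1 : f (-u) = 1 := by rw [map_neg, hfu]; norm_num
      have h2 : ‖(-u : X)‖ = 1 := by rwa [norm_neg]
      have := huniq (-u) h2 h1
      rw [← this]; simp
  have hkey := key hrefl S T hSc hTc hSTorth x hMS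
  intro t
  have h := hkey t
  have hSx : S x = y := by rw [hSapp, hfx1, one_smul]
  rwa [hSx] at h
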